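/- If w = u10v is a lower Christoffel word, then the word u01v obtained by exchanging that occurrence of 10 into 01 is not digitally convex. -/

import Mathlib

/-- A word is primitive if it is not a proper power: `w = v^n` implies `n = 1`. -/
def Primitive {α : Type*} (w : List α) : Prop :=
  ∀ (v : List α) (n : ℕ), w = (List.replicate n v).flatten → n = 1

/-- A Lyndon word: nonempty and lexicographically strictly smaller than all
its proper nonempty suffixes. -/
def Lyndon {α : Type*} [LinearOrder α] (w : List α) : Prop :=
  w ≠ [] ∧ ∀ u v : List α, w = u ++ v → u ≠ [] → v ≠ [] → List.Lex (· < ·) w v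

/-- A Lyndon word for the reversed order `1 < 0` on `Bool`. -/
def LyndonRev (w : List Bool) : Prop :=
  w ≠ [] ∧ ∀ u v : List Bool, w = u ++ v → u ≠ [] → v ≠ [] → List.Lex (· > ·) w v

/-- A binary word is balanced if the numbers of `1`s in any two factors of the
same length differ by at most 1. (`false` plays the role of `0`, `true` of `1`.) -/
def Balanced01 (w : List Bool) : Prop :=
  ∀ u v : List Bool, u <:+: w → v <:+: w → u.length = v.length →
    (u.count true : ℤ) - (v.count true : ℤ) ≤ 1

/-- `w` has period `p`: `w[i] = w[i+p]` for all valid indices. -/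
def HasPeriod (w : List Bool) (p : ℕ) : Prop :=
  ∀ i : ℕ, i + p < w.length → w[i]? = w[i + p]?

/-- A central word: it has coprime periods `p`, `q` and length `p + q - 2`. -/
def Central (w : List Bool) : Prop :=
  ∃ p q : ℕ, Nat.Coprime p q ∧ HasPeriod w p ∧ HasPeriod w q ∧ w.length + 2 = p + q

/-- The lower Christoffel word of slope `b/a`: letter `i` is `1` (`true`) iff the
line `y = bx/(a+b)`... encoded via floor differences `⌊(i+1)b/(a+b)⌋ - ⌊ib/(a+b)⌋`. -/
def chr (a b : ℕ) : List Bool :=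
  List.ofFn (fun i : Fin (a + b) =>
    decide ((i : ℕ) * b / (a + b) < ((i : ℕ) + 1) * b / (a + b)))

/-- An (upward) digitally convex word: all factors of its Lyndon factorization
(for the order `0 < 1`) are balanced Lyndon words, i.e. primitive lower
Christoffel words. -/
def DC (w : List Bool) : Prop :=
  ∃ L : List (List Bool), L.flatten = w ∧ (∀ x ∈ L, Lyndon x ∧ Balanced01 x) ∧
    L.Chain' (fun a b => ¬ List.Lex (· < ·) a b)

/-- A downward digitally convex word: all factors of its Lyndon factorization
for the order `1 < 0` are balanced. -/
def DCdown (w : List Bool) : Prop :=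
  ∃ L : List (List Bool), L.flatten = w ∧ (∀ x ∈ L, LyndonRev x ∧ Balanced01 x) ∧
    L.Chain' (fun a b => ¬ List.Lex (· > ·) a b)

/-- `(u, v)` is the standard factorization of `u ++ v`: both parts nonempty and
`v` is the lexicographically least proper nonempty suffix of `u ++ v`. -/
def StdFact (u v : List Bool) : Prop :=
  u ≠ [] ∧ v ≠ [] ∧
    ∀ s : List Bool, s ≠ [] → s ≠ u ++ v → s <:+ u ++ v →
      s = v ∨ List.Lex (· < ·) v s

/-- A word is unbordered if it has no nonempty proper border. -/
def Unbordered (w : List Bool) : Prop :=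
  ∀ u : List Bool, u <+: w → u <:+ w → u ≠ w → u = []

namespace Stmt18Aux




/-! ### Lex order helpers -/

theorem lex_trichotomy (s t : List Bool) :
    List.Lex (· < ·) s t ∨ s = t ∨ List.Lex (· < ·) t s := by
  induction s generalizing t with
  | nil =>
    cases t with
    | nil => exact Or.inr (Or.inl rfl)
    | cons b t => exact Or.inl List.Lex.nil
  | cons a s ih =>
    cases t with
    | nil => exact Or.inr (Or.inr List.Lex.nil)
    | cons b t =>
      rcases lt_trichotomy a b with h | h | h
      · exact Or.inl (List.Lex.rel h)
      · subst h
        rcases ih t with h | h | h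
        · exact Or.inl (List.Lex.cons h)
        · exact Or.inr (Or.inl (by rw [h]))
        · exact Or.inr (Or.inr (List.Lex.cons h))
      · exact Or.inr (Or.inr (List.Lex.rel h))

theorem lex_decomp {s t : List Bool} (h : List.Lex (· < ·) s t) :
    (s <+: t ∧ s ≠ t) ∨
      ∃ n, ∃ (h1 : n < s.length) (h2 : n < t.length),
        s.take n = t.take n ∧ s[n] = false ∧ t[n] = true := by
  induction h with
  | nil =>
    left
    exact ⟨⟨_, rfl⟩, by simp⟩
  | @cons a l₁ l₂ h ih =>
    rcases ih with ⟨hp, hne⟩ | ⟨n, h1, h2, he, hs, ht⟩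
    · left
      exact ⟨⟨hp.choose, by rw [List.cons_append, hp.choose_spec]⟩, by simp [hne]⟩
    · right
      exact ⟨n + 1, by simpa using Nat.succ_lt_succ h1, by simpa using Nat.succ_lt_succ h2,
        by simp [he], by simpa using hs, by simpa using ht⟩
  | @rel a l₁ b l₂ h =>
    right
    rcases Bool.lt_iff.mp h with ⟨ha, hb⟩
    exact ⟨0, by simp, by simp, by simp, by simpa using ha, by simpa using hb⟩


def cnt (x : List Bool) (j : ℕ) : ℕ := ((x.take j).count true)

theorem cnt_zero (x : List Bool) : cnt x 0 = 0 := rfl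

theorem cnt_length (x : List Bool) : cnt x x.length = x.count true := by
  simp [cnt]

theorem cnt_add (x : List Bool) (i j : ℕ) :
    cnt x (i + j) = cnt x i + ((x.drop i).take j).count true := by
  rw [cnt, List.take_add, List.count_append]; rfl

theorem seg_infix (x : List Bool) (i j : ℕ) : (x.drop i).take j <:+: x :=
  ⟨x.take i, (x.drop i).drop j, by
    rw [List.append_assoc, List.take_append_drop, List.take_append_drop]⟩

theorem seg_length (x : List Bool) {i j : ℕ} (h : i + j ≤ x.length) :
    ((x.drop i).take j).length = j := by
  simp [List.length_take, List.length_drop]; omega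

theorem cnt_succ_true {x : List Bool} {t : ℕ} (ht : t < x.length) (h : x[t] = true) :
    cnt x (t + 1) = cnt x t + 1 := by
  rw [cnt, List.take_succ, List.count_append, List.getElem?_eq_getElem ht, h]
  rfl

theorem cnt_succ_false {x : List Bool} {t : ℕ} (ht : t < x.length) (h : x[t] = false) :
    cnt x (t + 1) = cnt x t := by
  rw [cnt, List.take_succ, List.count_append, List.getElem?_eq_getElem ht, h]
  rfl

/-- Balance in prefix-count form: windows of equal length `j` at `i` and `i'`. -/
theorem bal' {x : List Bool} (hB : Balanced01 x) {i i' j : ℕ}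
    (h1 : i + j ≤ x.length) (h2 : i' + j ≤ x.length) :
    cnt x (i + j) + cnt x i' ≤ cnt x (i' + j) + cnt x i + 1 := by
  have hb := hB _ _ (seg_infix x i j) (seg_infix x i' j)
    (by rw [seg_length x h1, seg_length x h2])
  have e1 := cnt_add x i j
  have e2 := cnt_add x i' j
  omega



/-- From the Lyndon property: comparison of `x` with its suffix at `i`. -/
theorem lyndon_suffix {x : List Bool} (hL : Lyndon x) {i : ℕ} (hi : 0 < i)
    (him : i < x.length) :
    ∃ t, ∃ (ht : i + t < x.length), x.take t = (x.drop i).take t ∧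
      x[t]'(by omega) = false ∧ x[i + t]'(by omega) = true := by
  have hlex : List.Lex (· < ·) x (x.drop i) := by
    refine hL.2 (x.take i) (x.drop i) (x.take_append_drop i).symm ?_ ?_
    · intro h
      rw [List.take_eq_nil_iff] at h
      rcases h with h | h
      · omega
      · simp [h] at him
    · intro h
      rw [List.drop_eq_nil_iff] at h
      omega
  rcases lex_decomp hlex with ⟨hp, hne⟩ | ⟨t, h1, h2, he, hs, ht⟩
  · exfalso
    have := hp.length_le
    simp at this
    omega
  · have h2' : t < x.length - i := by simpa using h2
    refine ⟨t, by omega, he, hs, ?_⟩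
    have h3 : (x.drop i)[t] = x[i + t]'(by omega) := List.getElem_drop
    rw [← h3, ht]

/-- Lemma R: every window's count is at least the prefix count (same length). -/
theorem lemR {x : List Bool} (hL : Lyndon x) (hB : Balanced01 x) {i j : ℕ}
    (h : i + j ≤ x.length) : cnt x j + cnt x i ≤ cnt x (i + j) := by
  rcases Nat.eq_zero_or_pos i with rfl | hi
  · simp [cnt_zero]
  rcases Nat.eq_zero_or_pos j with rfl | hj
  · simp [cnt_zero]
  have him : i < x.length := by omega
  obtain ⟨t, htm, he, hxt, hxit⟩ := lyndon_suffix hL hi him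
  rcases le_or_gt j t with hjt | htj
  · -- the window and the prefix agree entirely
    have hpre : x.take j = (x.drop i).take j := by
      have h2 := congrArg (List.take j) he
      rwa [List.take_take, List.take_take, Nat.min_eq_left hjt] at h2
    have e := cnt_add x i j
    have e2 : cnt x j = ((x.drop i).take j).count true := by rw [cnt, hpre]
    omega
  · -- j > t : mismatch inside the window
    -- prefix side
    have hct1 : cnt x (t + 1) = cnt x t := cnt_succ_false (by omega) hxt
    have ep : cnt x j = cnt x (t + 1) + ((x.drop (t+1)).take (j - t - 1)).count true := by
      have := cnt_add x (t + 1) (j - t - 1)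
      rw [show t + 1 + (j - t - 1) = j by omega] at this
      exact this
    -- window side
    have hcit : cnt x (i + t) = cnt x i + cnt x t := by
      have e := cnt_add x i t
      have : cnt x t = ((x.drop i).take t).count true := by
        rw [cnt, he]
      omega
    have hcit1 : cnt x (i + t + 1) = cnt x (i + t) + 1 := cnt_succ_true (by omega) hxit
    have ew : cnt x (i + j) = cnt x (i + t + 1) + ((x.drop (i+t+1)).take (j - t - 1)).count true := by
      have := cnt_add x (i + t + 1) (j - t - 1)
      rw [show i + t + 1 + (j - t - 1) = i + j by omega] at this
      exact this
    -- balance between the two tails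
    have hbal := bal' hB (i := t + 1) (i' := i + t + 1) (j := j - t - 1)
      (by omega) (by omega)
    have e1 := cnt_add x (t + 1) (j - t - 1)
    have e2 := cnt_add x (i + t + 1) (j - t - 1)
    omega

section P

variable {x : List Bool} (hL : Lyndon x) (hB : Balanced01 x)

/-- Cyclic extension of the prefix-count function. -/
def fext (x : List Bool) (ℓ : ℕ) : ℕ :=
  (x.count true) * (ℓ / x.length) + cnt x (ℓ % x.length)

theorem length_pos_of_lyndon {x : List Bool} (hL : Lyndon x) : 0 < x.length :=
  List.length_pos_iff.mpr hL.1

theorem fext_eq {x : List Bool} (hL : Lyndon x) {ℓ : ℕ} (h : ℓ ≤ x.length) :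
    fext x ℓ = cnt x ℓ := by
  have hm := length_pos_of_lyndon hL
  rcases lt_or_eq_of_le h with h | rfl
  · rw [fext, Nat.div_eq_of_lt h, Nat.mod_eq_of_lt h]; simp
  · rw [fext, Nat.div_self hm, Nat.mod_self]
    simp [cnt_zero, cnt_length]

theorem fext_add_length (x : List Bool) (ℓ : ℕ) :
    fext x (ℓ + x.length) = fext x ℓ + x.count true := by
  rcases Nat.eq_zero_or_pos x.length with h | h
  · have hx : x = [] := List.length_eq_zero_iff.mp h
    simp [fext, hx]
  · rw [fext, fext, Nat.add_div_right _ h, Nat.add_mod_right]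
    ring

theorem fext_zero (x : List Bool) : fext x 0 = 0 := by
  simp [fext, cnt_zero]

theorem sum_fext_shift (x : List Bool) (j : ℕ) :
    ∑ i ∈ Finset.range x.length, fext x (i + j)
      = (∑ i ∈ Finset.range x.length, fext x i) + j * x.count true := by
  induction j with
  | zero => simp
  | succ j ih =>
    have e1 : ∑ i ∈ Finset.range (x.length + 1), fext x (i + j)
        = (∑ i ∈ Finset.range x.length, fext x (i + 1 + j)) + fext x (0 + j) :=
      Finset.sum_range_succ' _ _
    have e2 : ∑ i ∈ Finset.range (x.length + 1), fext x (i + j)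
        = (∑ i ∈ Finset.range x.length, fext x (i + j)) + fext x (x.length + j) :=
      Finset.sum_range_succ _ _
    have e3 : fext x (x.length + j) = fext x j + x.count true := by
      rw [Nat.add_comm x.length j, fext_add_length]
    have e4 : ∀ i, i + 1 + j = i + (j + 1) := by omega
    simp only [e4] at e1
    simp only [Nat.zero_add] at e1
    have e5 : (j + 1) * x.count true = j * x.count true + x.count true := by ring
    omega

/-- The cyclic band: every cyclic window count is at most prefix count + 1. -/
theorem cyc_band {x : List Bool} (hL : Lyndon x) (hB : Balanced01 x) {i j : ℕ}
    (hi : i < x.length) (hj : j ≤ x.length) :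
    fext x (i + j) ≤ fext x i + cnt x j + 1 := by
  have hm := length_pos_of_lyndon hL
  rcases le_or_gt (i + j) x.length with h | h
  · rw [fext_eq hL h, fext_eq hL (le_of_lt hi)]
    have := bal' hB (i := i) (i' := 0) (j := j) h (by omega)
    simp [cnt_zero] at this
    omega
  · -- wrap-around: a = x.length - i, b = i + j - x.length
    have hb : i + j = (i + j - x.length) + x.length := by omega
    rw [hb, fext_add_length, fext_eq hL (by omega), fext_eq hL (le_of_lt hi)]
    set a := x.length - i with ha
    set b := i + j - x.length with hbd
    -- suffix window of length a at position i  vs  prefix of length a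
    have h1 : cnt x (i + a) + cnt x 0 ≤ cnt x (0 + a) + cnt x i + 1 :=
      bal' hB (by omega) (by omega)
    rw [show i + a = x.length by omega, Nat.zero_add] at h1
    have h2 : cnt x a + cnt x b ≤ cnt x (b + a) :=
      lemR hL hB (i := b) (j := a) (by omega)
    rw [show b + a = j by omega] at h2
    have e3 : cnt x x.length = x.count true := cnt_length x
    rw [cnt_zero] at h1
    omega

/-- P : strict lower bound on prefix counts. -/
theorem prefP {x : List Bool} (hL : Lyndon x) (hB : Balanced01 x) {j : ℕ}
    (hj : j ≤ x.length) :
    j * x.count true < x.length * (cnt x j + 1) := by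
  have hm := length_pos_of_lyndon hL
  obtain ⟨M, hM⟩ : ∃ M, x.length = M + 1 := ⟨x.length - 1, by omega⟩
  have hsum := sum_fext_shift x j
  have e1 : ∑ i ∈ Finset.range (M + 1), fext x (i + j)
      = (∑ i ∈ Finset.range M, fext x (i + 1 + j)) + fext x (0 + j) :=
    Finset.sum_range_succ' _ _
  have e2 : ∑ i ∈ Finset.range (M + 1), fext x i
      = (∑ i ∈ Finset.range M, fext x (i + 1)) + fext x 0 :=
    Finset.sum_range_succ' _ _
  have hband : ∀ i ∈ Finset.range M, fext x (i + 1 + j) ≤ fext x (i + 1) + (cnt x j + 1) := by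
    intro i hi
    have : i + 1 < x.length := by
      simp [Finset.mem_range] at hi; omega
    have := cyc_band hL hB this hj
    omega
  have hsum2 : ∑ i ∈ Finset.range M, fext x (i + 1 + j)
      ≤ (∑ i ∈ Finset.range M, fext x (i + 1)) + M * (cnt x j + 1) := by
    calc ∑ i ∈ Finset.range M, fext x (i + 1 + j)
        ≤ ∑ i ∈ Finset.range M, (fext x (i + 1) + (cnt x j + 1)) :=
          Finset.sum_le_sum hband
      _ = (∑ i ∈ Finset.range M, fext x (i + 1)) + M * (cnt x j + 1) := by
          rw [Finset.sum_add_distrib, Finset.sum_const, Finset.card_range, smul_eq_mul]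
  have e3 : fext x (0 + j) = cnt x j := by rw [Nat.zero_add]; exact fext_eq hL hj
  have e4 : fext x 0 = 0 := fext_zero x
  have e5 : (M + 1) * (cnt x j + 1) = M * (cnt x j + 1) + (cnt x j + 1) := by ring
  rw [hM] at hsum ⊢
  omega

end P

/-- Q : upper bound on prefix counts. -/
theorem prefQ {x : List Bool} (hL : Lyndon x) (hB : Balanced01 x) {j : ℕ}
    (hj : j ≤ x.length) :
    x.length * cnt x j ≤ j * x.count true := by
  by_contra hcon
  push_neg at hcon
  have hm := length_pos_of_lyndon hL
  set m := x.length with hmdef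
  set k := x.count true with hkdef
  -- maximize E over range (m+1)
  set E : ℕ → ℤ := fun ℓ => (m : ℤ) * cnt x ℓ - (ℓ : ℤ) * k with hE
  obtain ⟨i, him, hmax⟩ :=
    (Finset.range (m + 1)).exists_max_image E ⟨0, by simp⟩
  simp only [Finset.mem_range] at him
  have hEj : 1 ≤ E j := by
    simp only [hE]
    have hz : ((j * k : ℕ) : ℤ) < ((m * cnt x j : ℕ) : ℤ) := by exact_mod_cast hcon
    push_cast at hz
    linarith
  have hEi : 1 ≤ E i := le_trans hEj (hmax j (by simp; omega))
  have hE0 : E 0 = 0 := by simp [hE, cnt_zero]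
  have hEm : E m = 0 := by
    simp only [hE]
    have : cnt x m = k := cnt_length x
    rw [this]
    ring
  have hi0 : 0 < i := by
    rcases Nat.eq_zero_or_pos i with rfl | h
    · rw [hE0] at hEi; omega
    · exact h
  have him' : i < m := by
    rcases lt_or_eq_of_le (by omega : i ≤ m) with h | rfl
    · exact h
    · rw [hEm] at hEi; omega
  obtain ⟨t, htm, he, hxt, hxit⟩ := lyndon_suffix hL hi0 him'
  -- count equations
  have hct1 : cnt x (t + 1) = cnt x t := cnt_succ_false (by omega) hxt
  have hcit : cnt x (i + t) = cnt x i + cnt x t := by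
    have e := cnt_add x i t
    have e2 : cnt x t = ((x.drop i).take t).count true := by rw [cnt, he]
    omega
  have hcit1 : cnt x (i + t + 1) = cnt x (i + t) + 1 := cnt_succ_true (by omega) hxit
  -- maximality at i + t + 1
  have hle : E (i + t + 1) ≤ E i := hmax (i + t + 1) (by simp; omega)
  -- P at t + 1
  have hP : (t + 1) * k < m * (cnt x (t + 1) + 1) := prefP hL hB (by omega)
  -- contradiction
  simp only [hE] at hle
  rw [hcit1, hcit] at hle
  rw [hct1] at hP
  have hPz : ((t : ℤ) + 1) * (k : ℤ) < (m : ℤ) * ((cnt x t : ℤ) + 1) := by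
    exact_mod_cast hP
  push_cast at hle
  linarith

/-- Slope comparison: if `y ≤ x` lexicographically (both balanced Lyndon) then
the slope of `y` is at most the slope of `x`. -/
theorem slope_le {x y : List Bool} (hLx : Lyndon x) (hBx : Balanced01 x)
    (hLy : Lyndon y) (hBy : Balanced01 y) (h : ¬ List.Lex (· < ·) x y) :
    y.count true * x.length ≤ x.count true * y.length := by
  rcases lex_trichotomy x y with hxy | rfl | hyx
  · exact absurd hxy h
  · rw [Nat.mul_comm]
  · rcases lex_decomp hyx with ⟨⟨r, hr⟩, hne⟩ | ⟨t, h1, h2, he, hyt, hxt⟩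
    · -- y is a proper prefix of x
      have hcy : cnt x y.length = y.count true := by
        rw [cnt, ← hr, List.take_left]
      have hQ := prefQ hLx hBx (j := y.length)
        (by rw [← hr]; simp)
      calc y.count true * x.length = x.length * cnt x y.length := by rw [hcy]; ring
        _ ≤ y.length * x.count true := hQ
        _ = x.count true * y.length := by ring
    · -- strict difference at position t : y has 0, x has 1
      have hyt1 : cnt y (t + 1) = cnt y t := cnt_succ_false h1 hyt
      have hxt1 : cnt x (t + 1) = cnt x t + 1 := cnt_succ_true h2 hxt
      have hce : cnt y t = cnt x t := by rw [cnt, cnt, he]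
      have hP := prefP hLy hBy (j := t + 1) (by omega)
      have hQ := prefQ hLx hBx (j := t + 1) (by omega)
      rw [hyt1, hce] at hP
      rw [hxt1] at hQ
      -- (t+1) * ky < my * (c+1)  and  mx * (c+1) ≤ (t+1) * kx
      have key : (t + 1) * (y.count true * x.length) < (t + 1) * (x.count true * y.length) := by
        calc (t + 1) * (y.count true * x.length)
            = ((t + 1) * y.count true) * x.length := by ring
          _ < (y.length * (cnt x t + 1)) * x.length :=
              (Nat.mul_lt_mul_right (length_pos_of_lyndon hLx)).mpr hP
          _ = (x.length * (cnt x t + 1)) * y.length := by ring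
          _ ≤ ((t + 1) * x.count true) * y.length := by
              exact Nat.mul_le_mul_right _ hQ
          _ = (t + 1) * (x.count true * y.length) := by ring
      exact le_of_lt (Nat.lt_of_mul_lt_mul_left key)

/-- Aggregated slope bound over a chain. -/
theorem slope_flatten {x : List Bool} (hLx : Lyndon x) (hBx : Balanced01 x) :
    ∀ L : List (List Bool), (∀ y ∈ L, Lyndon y ∧ Balanced01 y) →
      (x :: L).Chain' (fun a b => ¬ List.Lex (· < ·) a b) →
      L.flatten.count true * x.length ≤ x.count true * L.flatten.length := by
  intro L
  induction L generalizing x with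
  | nil => simp
  | cons y L' ih =>
    intro hall hch
    have hy := hall y (by simp)
    have hall' : ∀ z ∈ L', Lyndon z ∧ Balanced01 z := fun z hz => hall z (by simp [hz])
    have hch' : (y :: L').Chain' (fun a b => ¬ List.Lex (· < ·) a b) :=
      (List.isChain_cons.mp hch).2
    have hxy : ¬ List.Lex (· < ·) x y := by
      rcases List.isChain_cons_cons.mp hch with ⟨h1, _⟩
      exact h1
    have hA : y.count true * x.length ≤ x.count true * y.length :=
      slope_le hLx hBx hy.1 hy.2 hxy
    have hIH : L'.flatten.count true * y.length ≤ y.count true * L'.flatten.length :=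
      ih hy.1 hy.2 hall' hch'
    have hmy := length_pos_of_lyndon hy.1
    -- transitivity : L'.flatten slope ≤ y slope ≤ x slope
    have hB2 : L'.flatten.count true * x.length ≤ x.count true * L'.flatten.length := by
      have step : (L'.flatten.count true * x.length) * y.length
          ≤ (x.count true * L'.flatten.length) * y.length := by
        calc (L'.flatten.count true * x.length) * y.length
            = (L'.flatten.count true * y.length) * x.length := by ring
          _ ≤ (y.count true * L'.flatten.length) * x.length :=
              Nat.mul_le_mul_right _ hIH
          _ = (y.count true * x.length) * L'.flatten.length := by ring
          _ ≤ (x.count true * y.length) * L'.flatten.length :=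
              Nat.mul_le_mul_right _ hA
          _ = (x.count true * L'.flatten.length) * y.length := by ring
      exact Nat.le_of_mul_le_mul_right step hmy
    simp only [List.flatten_cons, List.count_append, List.length_append]
    calc (y.count true + L'.flatten.count true) * x.length
        = y.count true * x.length + L'.flatten.count true * x.length := by ring
      _ ≤ x.count true * y.length + x.count true * L'.flatten.length := by omega
      _ = x.count true * (y.length + L'.flatten.length) := by ring

/-- Main chain bound : any digitally convex word's path lies above the chord. -/
theorem chain_bound (L : List (List Bool))
    (hall : ∀ y ∈ L, Lyndon y ∧ Balanced01 y)
    (hch : L.Chain' (fun a b => ¬ List.Lex (· < ·) a b)) :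
    ∀ i, 1 ≤ i → i ≤ L.flatten.length →
      i * L.flatten.count true < L.flatten.length * (cnt L.flatten i + 1) := by
  induction L with
  | nil => intro i h1 h2; simp at h2; omega
  | cons x L' ih =>
    intro i hi1 hi2
    have hx := hall x (by simp)
    have hall' : ∀ z ∈ L', Lyndon z ∧ Balanced01 z := fun z hz => hall z (by simp [hz])
    have hch' : L'.Chain' (fun a b => ¬ List.Lex (· < ·) a b) :=
      (List.isChain_cons.mp hch).2
    have hslope : L'.flatten.count true * x.length ≤ x.count true * L'.flatten.length :=
      slope_flatten hx.1 hx.2 L' hall' hch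
    have hm := length_pos_of_lyndon hx.1
    simp only [List.flatten_cons, List.count_append, List.length_append] at hi2 ⊢
    set m := x.length
    set k := x.count true
    set n₂ := L'.flatten.length
    set b₂ := L'.flatten.count true
    rcases le_or_gt i m with him | him
    · -- inside the first factor
      have hcnt : cnt (x ++ L'.flatten) i = cnt x i := by
        rw [cnt, cnt, List.take_append_of_le_length him]
      have hP : i * k < m * (cnt x i + 1) := prefP hx.1 hx.2 him
      rw [hcnt]
      -- i*(k+b₂) < (m+n₂)*(c+1) from  i*k < m*(c+1), b₂*m ≤ k*n₂, i ≤ m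
      set c := cnt x i
      have key : m * (i * (k + b₂)) < m * ((m + n₂) * (c + 1)) := by
        calc m * (i * (k + b₂)) = (i * k) * m + i * (b₂ * m) := by ring
          _ ≤ (i * k) * m + i * (k * n₂) := by
              have := Nat.mul_le_mul_left i hslope
              omega
          _ = (i * k) * (m + n₂) := by ring
          _ < (m * (c + 1)) * (m + n₂) :=
              (Nat.mul_lt_mul_right (by omega : 0 < m + n₂)).mpr hP
          _ = m * ((m + n₂) * (c + 1)) := by ring
      exact Nat.lt_of_mul_lt_mul_left key
    · -- inside the rest
      obtain ⟨i₂, rfl⟩ : ∃ i₂, i = m + i₂ := ⟨i - m, by omega⟩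
      have hi₂1 : 1 ≤ i₂ := by omega
      have hi₂2 : i₂ ≤ n₂ := by omega
      have hIH : i₂ * b₂ < n₂ * (cnt L'.flatten i₂ + 1) := ih hall' hch' i₂ hi₂1 hi₂2
      have hcnt : cnt (x ++ L'.flatten) (m + i₂) = k + cnt L'.flatten i₂ := by
        rw [cnt, List.take_append, List.count_append, cnt]
        rw [List.take_of_length_le (Nat.le_add_right _ _), show m + i₂ - x.length = i₂ from Nat.add_sub_cancel_left x.length i₂]
      rw [hcnt]
      set c₂ := cnt L'.flatten i₂
      -- (m+i₂)*(k+b₂) < (m+n₂)*(k+c₂+1)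
      have hn₂ : 0 < n₂ := by omega
      have key : n₂ * ((m + i₂) * (k + b₂)) < n₂ * ((m + n₂) * (k + c₂ + 1)) := by
        nlinarith [Nat.mul_le_mul (le_refl (n₂ - i₂)) hslope, hIH, hi₂2, hm,
          Nat.sub_add_cancel hi₂2]
      exact Nat.lt_of_mul_lt_mul_left key

/-! ### Christoffel word computations -/

theorem length_chr (a b : ℕ) : (chr a b).length = a + b := by
  simp [chr]

theorem cnt_chr (a b : ℕ) (hn : 0 < a + b) :
    ∀ j, j ≤ a + b → cnt (chr a b) j = j * b / (a + b) := by
  intro j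
  induction j with
  | zero => intro _; simp [cnt_zero]
  | succ j ih =>
    intro hj
    have hj' : j ≤ a + b := by omega
    have hjl : j < (chr a b).length := by rw [length_chr]; omega
    have hget : (chr a b)[j]'hjl = decide (j * b / (a + b) < (j + 1) * b / (a + b)) := by
      simp [chr]
    have hmono : j * b / (a + b) ≤ (j + 1) * b / (a + b) :=
      Nat.div_le_div_right (by nlinarith)
    have hstep : (j + 1) * b / (a + b) ≤ j * b / (a + b) + 1 := by
      have h1 : (j + 1) * b ≤ j * b + (a + b) := by nlinarith [Nat.le_add_left b a]
      calc (j + 1) * b / (a + b) ≤ (j * b + (a + b)) / (a + b) := Nat.div_le_div_right h1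
        _ = j * b / (a + b) + 1 := Nat.add_div_right _ hn
    rcases Bool.eq_false_or_eq_true ((chr a b)[j]'hjl) with ht | hf
    · have hlt : j * b / (a + b) < (j + 1) * b / (a + b) := by
        rw [hget] at ht
        simpa using ht
      have := cnt_succ_true hjl ht
      rw [this, ih hj']
      omega
    · have hlt : ¬ (j * b / (a + b) < (j + 1) * b / (a + b)) := by
        rw [hget] at hf
        simpa using hf
      have := cnt_succ_false hjl hf
      rw [this, ih hj']
      omega

theorem count_chr (a b : ℕ) (hn : 0 < a + b) : (chr a b).count true = b := by
  have := cnt_chr a b hn (a + b) (le_refl _)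
  rw [← length_chr a b, cnt_length] at this
  rw [length_chr] at this
  rw [this, Nat.mul_div_cancel_left b hn]

/-! ### Final assembly -/

theorem main (u v : List Bool) (a b : ℕ)
    (hw : u ++ [true, false] ++ v = chr a b)
    (L : List (List Bool)) (hflat : L.flatten = u ++ [false, true] ++ v)
    (hall : ∀ x ∈ L, Lyndon x ∧ Balanced01 x)
    (hch : L.Chain' (fun a b => ¬ List.Lex (· < ·) a b)) : False := by
  set n := a + b with hndef
  set mu := u.length with hmudef
  have hlen : mu + 2 + v.length = n := by
    have h := congrArg List.length hw
    simp [length_chr] at h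
    omega
  have hn : 0 < n := by omega
  -- prefix counts of the Christoffel word
  have hw' : u ++ ([true, false] ++ v) = chr a b := by
    rw [← hw, List.append_assoc]
  have t1 : (chr a b).take mu = u := by
    rw [← hw', List.take_left]
  have t2 : (chr a b).take (mu + 1) = u ++ [true] := by
    rw [← hw', List.take_append]
    simp [hmudef]
  have t3 : (chr a b).take (mu + 2) = u ++ [true, false] := by
    rw [← hw', List.take_append]
    simp [hmudef]
  set cu := u.count true with hcudef
  have c1 : mu * b / n = cu := by
    rw [← cnt_chr a b hn mu (by omega), cnt, t1]
  have c2 : (mu + 1) * b / n = cu + 1 := by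
    rw [← cnt_chr a b hn (mu + 1) (by omega), cnt, t2]
    simp
    rfl
  have c3 : (mu + 2) * b / n = cu + 1 := by
    rw [← cnt_chr a b hn (mu + 2) (by omega), cnt, t3]
    simp
    rfl
  -- facts about the flipped word
  set w' := u ++ [false, true] ++ v with hw'def
  have hlen' : w'.length = n := by
    simp only [hw'def, List.length_append]
    simp at hlen ⊢
    omega
  have hcount' : w'.count true = b := by
    have hb : (chr a b).count true = b := count_chr a b hn
    rw [← hw] at hb
    rw [hw'def]
    simp at hb ⊢
    omega
  have hcnt' : cnt w' (mu + 1) = cu := by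
    rw [hw'def, cnt, List.append_assoc, List.take_append]
    simp
    simp [hmudef, hcudef]
    rw [List.take_of_length_le (Nat.le_add_right _ _)]
  -- apply the chain bound at mu + 1
  have hbound := chain_bound L hall hch (mu + 1) (by omega)
    (by rw [hflat, hlen']; omega)
  rw [hflat] at hbound
  rw [hlen', hcount', hcnt'] at hbound
  -- (mu+1) * b < n * (cu + 1) = n * ((mu+1)*b/n) ≤ (mu+1)*b
  have hdiv : ((mu + 1) * b / n) * n ≤ (mu + 1) * b := Nat.div_mul_le_self _ _
  rw [c2] at hdiv
  have : n * (cu + 1) = (cu + 1) * n := Nat.mul_comm _ _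
  omega

end Stmt18Aux

/-- If `w = u10v` is a lower Christoffel word, then `u01v` is not digitally
convex. -/
theorem stmt18 (u v : List Bool) (a b : ℕ) (hab : ¬(a = 0 ∧ b = 0))
    (hw : u ++ [true, false] ++ v = chr a b) :
    ¬ DC (u ++ [false, true] ++ v) := by
  intro hDC
  obtain ⟨L, hflat, hall, hch⟩ := hDC
  exact Stmt18Aux.main u v a b hw L hflat hall hch
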